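/- Ryser's formula: for an n×n matrix A over a commutative ring, per(A) = (−1)^n · Σ_{S ⊆ {1,…,n}} (−1)^{|S|} · Π_{i=1}^n (Σ_{j ∈ S} a_{ij}). -/

import Mathlib

open Matrix Finset

private lemma key_sum {n : ℕ} {R : Type*} [CommRing R] (T : Finset (Fin n)) :
    (∑ S : Finset (Fin n), if T ⊆ S then ((-1 : R) ^ S.card) else 0)
      = (-1) ^ n * (if T = univ then 1 else 0) := by
  classical
  have e : (∑ S : Finset (Fin n), if T ⊆ S then ((-1 : R) ^ S.card) else 0)
      = ∑ U : Finset (Fin n), if U ⊆ Tᶜ then ((-1 : R) ^ (Uᶜ).card) else 0 := by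
    refine Fintype.sum_equiv (Function.Involutive.toPerm _ compl_compl) _ _ fun S => ?_
    simp [Function.Involutive.toPerm, Finset.compl_subset_compl]
  rw [e]
  have hcard : ∀ U : Finset (Fin n),
      ((-1 : R) ^ (Uᶜ).card) = (-1) ^ n * (-1) ^ U.card := by
    intro U
    have h1 : (Uᶜ).card + U.card = n := by
      rw [Finset.card_compl]
      simpa using Nat.sub_add_cancel (by simpa using Finset.card_le_card (Finset.subset_univ U))
    have h2 : ((-1 : R) ^ (Uᶜ).card) * ((-1) ^ U.card * (-1) ^ U.card) = (-1) ^ n * (-1) ^ U.card := by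
      rw [← mul_assoc, ← pow_add, h1]
    have h3 : ((-1 : R) ^ U.card * (-1) ^ U.card) = 1 := by
      rw [← pow_add, ← two_mul, pow_mul]; simp
    rw [h3, mul_one] at h2
    exact h2
  have e2 : (∑ U : Finset (Fin n), if U ⊆ Tᶜ then ((-1 : R) ^ (Uᶜ).card) else 0)
      = (-1) ^ n * ∑ U ∈ (Tᶜ).powerset, ((-1 : R) ^ U.card) := by
    rw [Finset.mul_sum, ← Finset.sum_filter]
    refine Finset.sum_congr ?_ (fun U _ => hcard U)
    ext U; simp [Finset.mem_powerset]
  rw [e2]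
  have e3 : (∑ U ∈ (Tᶜ).powerset, ((-1 : R) ^ U.card))
      = ((∑ U ∈ (Tᶜ).powerset, ((-1 : ℤ) ^ U.card) : ℤ) : R) := by push_cast; rfl
  rw [e3, Finset.sum_powerset_neg_one_pow_card]
  by_cases h : T = univ
  · simp [h]
  · have hne : Tᶜ ≠ ∅ := by simpa [Finset.compl_eq_empty_iff] using h
    simp [h, hne]

private lemma perm_sum {n : ℕ} {R : Type*} [CommRing R] (A : Matrix (Fin n) (Fin n) R) :
    A.permanent = ∑ σ : Equiv.Perm (Fin n), ∏ i, A i (σ i) := by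
  rw [Matrix.permanent]
  rw [← Equiv.sum_comp (Equiv.inv (Equiv.Perm (Fin n)))]
  refine Finset.sum_congr rfl fun σ _ => ?_
  rw [← Equiv.prod_comp σ]
  simp

private lemma image_univ_eq_iff {n : ℕ} (f : Fin n → Fin n) :
    Finset.image f univ = univ ↔ Function.Bijective f := by
  constructor
  · intro h
    have hs : Function.Surjective f := fun b => by
      have hb : b ∈ (univ : Finset (Fin n)) := Finset.mem_univ b
      rw [← h] at hb
      simpa using hb
    exact Finite.surjective_iff_bijective.mp hs
  · intro h
    exact Finset.image_univ_of_surjective h.surjective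

/-- Ryser's formula:
`per A = (-1)^n ∑_{S ⊆ {1,…,n}} (-1)^{|S|} ∏ i (∑ j ∈ S, A i j)`. -/
theorem ryser_formula {n : ℕ} {R : Type*} [CommRing R] (A : Matrix (Fin n) (Fin n) R) :
    A.permanent =
      (-1) ^ n *
        ∑ S : Finset (Fin n), (-1) ^ S.card * ∏ i, ∑ j ∈ S, A i j := by
  classical
  have main : (∑ S : Finset (Fin n), (-1 : R) ^ S.card * ∏ i, ∑ j ∈ S, A i j)
      = (-1) ^ n * A.permanent := by
    calc
      (∑ S : Finset (Fin n), (-1 : R) ^ S.card * ∏ i, ∑ j ∈ S, A i j)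
          = ∑ S : Finset (Fin n), ∑ f : Fin n → Fin n,
              (if (∀ i, f i ∈ S) then (-1 : R) ^ S.card * ∏ i, A i (f i) else 0) := by
        refine Finset.sum_congr rfl fun S _ => ?_
        rw [Finset.prod_univ_sum (t := fun _ => S) (f := fun i j => A i j), Finset.mul_sum,
          ← Finset.univ_inter (Fintype.piFinset fun _ : Fin n => S), ← Finset.sum_ite_mem]
        refine Finset.sum_congr rfl fun f _ => ?_
        simp [Fintype.mem_piFinset]
      _ = ∑ f : Fin n → Fin n, ∑ S : Finset (Fin n),
              (if (∀ i, f i ∈ S) then (-1 : R) ^ S.card * ∏ i, A i (f i) else 0) :=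
        Finset.sum_comm
      _ = ∑ f : Fin n → Fin n, (∏ i, A i (f i)) *
              ∑ S : Finset (Fin n), (if Finset.image f univ ⊆ S then (-1 : R) ^ S.card else 0) := by
        refine Finset.sum_congr rfl fun f _ => ?_
        rw [Finset.mul_sum]
        refine Finset.sum_congr rfl fun S _ => ?_
        rw [mul_ite, mul_zero, mul_comm]
        congr 1
        simp [Finset.image_subset_iff]
      _ = ∑ f : Fin n → Fin n, (∏ i, A i (f i)) *
              ((-1 : R) ^ n * (if Finset.image f univ = univ then 1 else 0)) := by
        refine Finset.sum_congr rfl fun f _ => ?_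
        rw [key_sum]
      _ = (-1 : R) ^ n * ∑ f : Fin n → Fin n,
              (if Function.Bijective f then ∏ i, A i (f i) else 0) := by
        rw [Finset.mul_sum]
        refine Finset.sum_congr rfl fun f _ => ?_
        by_cases h : Function.Bijective f
        · rw [if_pos ((image_univ_eq_iff f).mpr h), if_pos h]; ring
        · rw [if_neg (fun hh => h ((image_univ_eq_iff f).mp hh)), if_neg h]; ring
      _ = (-1 : R) ^ n * ∑ σ : Equiv.Perm (Fin n), ∏ i, A i (σ i) := by
        congr 1
        rw [← Finset.sum_filter]
        refine Finset.sum_bij' (fun f hf => Equiv.ofBijective f (by simpa using hf))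
          (fun σ _ => ⇑σ) ?_ ?_ ?_ ?_ ?_
        · intro f hf; exact Finset.mem_univ _
        · intro σ _; exact Finset.mem_filter.mpr ⟨Finset.mem_univ _, σ.bijective⟩
        · intro f hf; rfl
        · intro σ _; ext x; simp [Equiv.ofBijective]
        · intro f hf; rfl
      _ = (-1 : R) ^ n * A.permanent := by rw [perm_sum]
  rw [main, ← mul_assoc, ← pow_add, ← two_mul, pow_mul]
  simp
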